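/- Let m, n be coprime integers with n ≥ 1 and α = (m/n)·2π, and let d > 1 be an integer. Then cos α is an algebraic number of degree d over ℚ if and only if φ(n) = 2d. Equivalently, for n > 2 the field extension degree [ℚ(cos α) : ℚ] equals φ(n)/2. -/

import Mathlib

open Polynomial IntermediateField

set_option maxHeartbeats 1600000
set_option synthInstance.maxHeartbeats 400000

private lemma cos_key (m : ℤ) (n : ℕ) (hn : 2 < n) (hco : Int.gcd m (n : ℤ) = 1)
    (α : ℝ) (hα : α = ((m : ℝ) / (n : ℝ)) * (2 * Real.pi)) :
    IsIntegral ℚ (Real.cos α) ∧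
    2 * (minpoly ℚ (Real.cos α)).natDegree = Nat.totient n := by
  have hn0 : (n : ℝ) ≠ 0 := Nat.cast_ne_zero.mpr (by omega)
  set ζ : ℂ := Complex.exp (2 * Real.pi * Complex.I / n) ^ (m : ℤ) with hζdef
  have hζ : IsPrimitiveRoot ζ n :=
    (Complex.isPrimitiveRoot_exp n (by omega)).zpow_of_gcd_eq_one m hco
  have hζexp : ζ = Complex.exp ((α : ℂ) * Complex.I) := by
    rw [hζdef, ← Complex.exp_int_mul]
    congr 1
    rw [hα]
    push_cast
    have : (n : ℂ) ≠ 0 := Nat.cast_ne_zero.mpr (by omega)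
    field_simp
  have hζ0 : ζ ≠ 0 := hζ.ne_zero (by omega)
  set c : ℂ := (Real.cos α : ℂ) with hcdef
  have h2c : c * 2 = ζ + ζ⁻¹ := by
    rw [hζexp, ← Complex.exp_neg, hcdef, Complex.ofReal_cos, mul_comm, ← neg_mul]
    exact Complex.two_cos _
  have hζinv : ζ⁻¹ = ζ ^ (n - 1) := by
    refine inv_eq_of_mul_eq_one_right ?_
    rw [← pow_succ']
    have h3 : n - 1 + 1 = n := by omega
    rw [h3, hζ.pow_eq_one]
  have hζint : IsIntegral ℚ ζ := (hζ.isIntegral (by omega)).tower_top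
  have hcmem : c ∈ ℚ⟮ζ⟯ := by
    have h1 : ζ ∈ ℚ⟮ζ⟯ := mem_adjoin_simple_self ℚ ζ
    have hc : c = (ζ + ζ⁻¹) / 2 := by
      rw [← h2c]; ring
    rw [hc]
    refine div_mem (add_mem h1 (inv_mem h1)) ?_
    have := IntermediateField.algebraMap_mem ℚ⟮ζ⟯ (2 : ℚ)
    simpa using this
  haveI : FiniteDimensional ℚ ℚ⟮ζ⟯ := adjoin.finiteDimensional hζint
  have hcint : IsIntegral ℚ c := by
    have h1 : IsIntegral ℚ (⟨c, hcmem⟩ : ℚ⟮ζ⟯) := IsIntegral.of_finite ℚ _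
    have h2 := h1.algebraMap (B := ℂ)
    simpa using h2
  set F : IntermediateField ℚ ℂ := ℚ⟮c⟯ with hFdef
  have hFle : F ≤ ℚ⟮ζ⟯ := by
    rw [hFdef]
    exact adjoin_le_iff.mpr (Set.singleton_subset_iff.mpr hcmem)
  -- F consists of real numbers
  have hζnotF : ζ ∉ F := by
    intro hmem
    have hFR : F ≤ ((Complex.ofRealAm.restrictScalars ℚ).fieldRange) := by
      rw [hFdef]
      refine adjoin_le_iff.mpr (Set.singleton_subset_iff.mpr ?_)
      exact ⟨Real.cos α, rfl⟩
    obtain ⟨x, hx⟩ := hFR hmem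
    have hnorm : ‖ζ‖ = 1 := Complex.norm_eq_one_of_pow_eq_one hζ.pow_eq_one (by omega)
    have hxabs : |x| = 1 := by
      rw [← hnorm, ← hx]
      simp
    have hx2 : ζ ^ 2 = 1 := by
      rcases abs_eq (by norm_num : (0:ℝ) ≤ 1) |>.mp hxabs with h | h <;>
        · rw [← hx, h]; norm_num
    have hdvd := hζ.dvd_of_pow_eq_one 2 hx2
    exact absurd (Nat.le_of_dvd (by norm_num) hdvd) (by omega)
  have hζnotrange : ζ ∉ (algebraMap F ℂ).range := by
    rintro ⟨y, hy⟩
    exact hζnotF (hy ▸ y.2)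
  have hζintF : IsIntegral F ζ := hζint.tower_top
  -- minimal polynomial of ζ over F has degree 2
  have hcF : c ∈ F := mem_adjoin_simple_self ℚ c
  set t : F := ⟨c * 2, mul_mem hcF (by
    have := IntermediateField.algebraMap_mem F (2 : ℚ); simpa using this)⟩ with htdef
  set p : Polynomial F := X ^ 2 - C t * X + 1 with hpdef
  have hpdeg : p.natDegree = 2 := by
    rw [hpdef]
    compute_degree!
  have hproot : Polynomial.aeval ζ p = 0 := by
    rw [hpdef]
    simp only [map_add, map_sub, map_pow, map_one, map_mul, aeval_X, aeval_C]
    have ht : (algebraMap F ℂ) t = ζ + ζ⁻¹ := by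
      rw [htdef, ← h2c]; rfl
    rw [ht]
    field_simp
    ring
  have hdeg2 : (minpoly F ζ).natDegree = 2 := by
    have hple : (minpoly F ζ).natDegree ≤ 2 := by
      have hp0 : p ≠ 0 := fun h => by simp [h] at hpdeg
      calc (minpoly F ζ).natDegree ≤ p.natDegree :=
            Polynomial.natDegree_le_of_dvd (minpoly.dvd F ζ hproot) hp0
        _ = 2 := hpdeg
    have hge : 2 ≤ (minpoly F ζ).natDegree :=
      (minpoly.two_le_natDegree_iff hζintF).mpr hζnotrange
    omega
  -- tower of fields
  set E : IntermediateField F ℂ := IntermediateField.adjoin F {ζ} with hEdef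
  haveI : FiniteDimensional F E := adjoin.finiteDimensional hζintF
  have hfr2 : Module.finrank F E = 2 := by
    rw [hEdef, adjoin.finrank hζintF, hdeg2]
  have hres : IntermediateField.restrictScalars ℚ E = ℚ⟮ζ⟯ := by
    rw [hEdef]; refine (restrictScalars_adjoin_eq_sup (K := F) (S := {ζ})).trans ?_
    exact sup_eq_right.mpr hFle
  have hζfr : Module.finrank ℚ ℚ⟮ζ⟯ = Nat.totient n := by
    rw [adjoin.finrank hζint, ← cyclotomic_eq_minpoly_rat hζ (by omega),
      natDegree_cyclotomic]
  have htower : Module.finrank ℚ F * Module.finrank F E = Nat.totient n := by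
    rw [Module.finrank_mul_finrank ℚ F E]
    rw [← hζfr, ← hres]
    rfl
  have hFfr : Module.finrank ℚ F = (minpoly ℚ c).natDegree := by
    rw [hFdef, adjoin.finrank hcint]
  -- transfer from ℂ to ℝ
  have hinj : Function.Injective (Complex.ofRealAm.restrictScalars ℚ) :=
    Complex.ofReal_injective
  have hmp : minpoly ℚ c = minpoly ℚ (Real.cos α) :=
    minpoly.algHom_eq (Complex.ofRealAm.restrictScalars ℚ) hinj (Real.cos α)
  have hrint : IsIntegral ℚ (Real.cos α) :=
    (isIntegral_algHom_iff (Complex.ofRealAm.restrictScalars ℚ) hinj).mp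
      (show IsIntegral ℚ ((Complex.ofRealAm.restrictScalars ℚ) (Real.cos α)) from hcint)
  refine ⟨hrint, ?_⟩
  rw [← hmp]
  rw [← htower, hfr2, hFfr]
  ring

theorem cos_rational_angle_degree_iff_totient
    (m : ℤ) (n : ℕ) (hn : 1 ≤ n) (hco : Int.gcd m (n : ℤ) = 1)
    (α : ℝ) (hα : α = ((m : ℝ) / (n : ℝ)) * (2 * Real.pi))
    (d : ℕ) (hd : 1 < d) :
    ((IsAlgebraic ℚ (Real.cos α) ∧ (minpoly ℚ (Real.cos α)).natDegree = d) ↔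
      Nat.totient n = 2 * d) ∧
    (2 < n → Module.finrank ℚ (IntermediateField.adjoin ℚ ({Real.cos α} : Set ℝ)) =
      Nat.totient n / 2) := by
  by_cases hn2 : 2 < n
  · obtain ⟨hint, hkey⟩ := cos_key m n hn2 hco α hα
    constructor
    · constructor
      · rintro ⟨-, hdeg⟩
        omega
      · intro ht
        exact ⟨hint.isAlgebraic, by omega⟩
    · intro _
      have := adjoin.finrank hint
      rw [this]
      omega
  · -- n = 1 or n = 2 : cos α = ±1
    have habs : |Real.cos α| = 1 := by
      interval_cases n
      · rw [hα]
        push_cast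
        rw [div_one, Real.cos_int_mul_two_pi]
        norm_num
      · rw [hα]
        have : ((m : ℝ) / 2) * (2 * Real.pi) = (m : ℝ) * Real.pi := by ring
        push_cast
        rw [this]
        exact Real.abs_cos_int_mul_pi m
    have hdeg1 : (minpoly ℚ (Real.cos α)).natDegree = 1 := by
      rw [minpoly.natDegree_eq_one_iff]
      rcases abs_eq (by norm_num : (0:ℝ) ≤ 1) |>.mp habs with h | h
      · exact ⟨1, by simp [h]⟩
      · exact ⟨-1, by simp [h]⟩
    have htot : Nat.totient n = 1 := by
      interval_cases n
      · exact Nat.totient_one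
      · exact Nat.totient_two
    refine ⟨⟨fun h => by omega, fun h => by omega⟩, fun h => by omega⟩
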